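/- arXiv:math/0406352 — 2 statements merged into one kernel-verified Lean document; each statement's English description precedes it below -/
import Mathlib

section
/- Let H be an associative unital ℂ-algebra and E a ℂ-vector space which is a unital left H-module with ℂ-bilinear action. Let U ⊆ E be a balanced, convex, absorbent subset which is H-stable (for every h ∈ H there exists C > 0 with h•U ⊆ C•U). Then the set W = {h ∈ H : h•U ⊆ U} is balanced, convex, absorbent in H, and idempotent, i.e., W·W ⊆ W (where W·W = {w₁w₂ : w₁, w₂ ∈ W}). -/
open Pointwise

/-- Let `H` be an associative unital `ℂ`-algebra and `E` a `ℂ`-vector space which is a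
unital left `H`-module with `ℂ`-bilinear action. Let `U ⊆ E` be a balanced, convex,
absorbent subset which is `H`-stable (for every `h ∈ H` there is `C > 0` with
`h • U ⊆ C • U`). Then `W = {h : H | h • U ⊆ U}` is balanced, convex, absorbent in `H`,
and idempotent (`W * W ⊆ W`). -/
theorem arens_michael_stmt8 {H : Type*} [Ring H] [Algebra ℂ H]
    [Module ℝ H] [IsScalarTower ℝ ℂ H]
    {E : Type*} [AddCommGroup E] [Module ℂ E] [Module ℝ E] [IsScalarTower ℝ ℂ E]
    [Module H E] [IsScalarTower ℂ H E] [SMulCommClass ℂ H E]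
    (U : Set E) (hUbal : Balanced ℂ U) (hUconv : Convex ℝ U) (hUabs : Absorbent ℂ U)
    (hUstable : ∀ h : H, ∃ C : ℝ, 0 < C ∧ h • U ⊆ C • U) :
    Balanced ℂ {h : H | h • U ⊆ U} ∧ Convex ℝ {h : H | h • U ⊆ U} ∧
      Absorbent ℂ {h : H | h • U ⊆ U} ∧
      {h : H | h • U ⊆ U} * {h : H | h • U ⊆ U} ⊆ {h : H | h • U ⊆ U} := by
  have key : ∀ (t : ℝ) (h : H) (u : E), (t • h) • u = t • (h • u) := fun t h u => by
    rw [← smul_one_smul ℂ t h, smul_assoc, smul_one_smul]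
  refine ⟨?_, ?_, ?_, ?_⟩
  · intro a ha h hh
    obtain ⟨g, hg, rfl⟩ := hh
    intro x hx
    obtain ⟨u, hu, rfl⟩ := hx
    show (a • g) • u ∈ U
    rw [smul_assoc]
    exact hUbal a ha (Set.smul_mem_smul_set (hg (Set.smul_mem_smul_set hu)))
  · intro h1 hh1 h2 hh2 t s ht hs hts
    intro x hx
    obtain ⟨u, hu, rfl⟩ := hx
    show (t • h1 + s • h2) • u ∈ U
    rw [add_smul, key, key]
    exact hUconv (hh1 (Set.smul_mem_smul_set hu)) (hh2 (Set.smul_mem_smul_set hu)) ht hs hts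
  · intro h
    obtain ⟨C, hC, hCU⟩ := hUstable h
    rw [absorbs_iff_norm]
    refine ⟨C, fun c hc => ?_⟩
    have hc0 : c ≠ 0 := by
      intro h0; rw [h0, norm_zero] at hc; linarith
    intro y hy
    rw [Set.mem_singleton_iff] at hy
    subst hy
    rw [Set.mem_smul_set_iff_inv_smul_mem₀ hc0]
    intro x hx
    obtain ⟨u, hu, rfl⟩ := hx
    show (c⁻¹ • y) • u ∈ U
    rw [smul_assoc]
    obtain ⟨v, hv, hvu⟩ := hCU (Set.smul_mem_smul_set hu)
    simp only at hvu
    rw [← hvu, ← smul_one_smul ℂ C v, ← smul_assoc]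
    refine hUbal _ ?_ (Set.smul_mem_smul_set hv)
    rw [norm_smul, norm_smul, norm_one, mul_one, norm_inv, Real.norm_eq_abs,
      abs_of_pos hC]
    calc ‖c‖⁻¹ * C ≤ C⁻¹ * C := by
          have := hC.le.trans hc
          gcongr
      _ = 1 := inv_mul_cancel₀ hC.ne'
  · intro x hx
    obtain ⟨h1, hh1, h2, hh2, rfl⟩ := hx
    intro y hy
    obtain ⟨u, hu, rfl⟩ := hy
    show (h1 * h2) • u ∈ U
    rw [mul_smul]
    exact hh1 (Set.smul_mem_smul_set (hh2 (Set.smul_mem_smul_set hu)))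
end

section
/- Let U ⊆ A be an absolutely convex idempotent subset (U·U ⊆ U) and V ⊆ H an absolutely convex idempotent subset (V·V ⊆ V). Define W = {w ∈ H : μ(w⊗u) ∈ U for every u ∈ U} and V' = Δ⁻¹(Γ(W⊗V)) ⊆ H. Then the smash multiplication maps Γ(U⊗V') and Γ(U⊗V) into Γ(U⊗V): for every x ∈ Γ(U⊗V') and y ∈ Γ(U⊗V) one has m#(x⊗y) ∈ Γ(U⊗V). -/
open TensorProduct

noncomputable section

/- Setup: `H` is a bialgebra over `ℂ`; `A` is an associative unital `ℂ`-algebra equipped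
with a left `H`-module structure whose action is `ℂ`-bilinear (`1_H` acts as the identity,
since this is a module structure). -/
variable (H A : Type*) [Ring H] [Bialgebra ℂ H]
  [Ring A] [Algebra ℂ A] [Module H A] [IsScalarTower ℂ H A] [SMulCommClass ℂ H A]

/-- The action of `H` on `A` as a `ℂ`-bilinear map. -/
def actB : H →ₗ[ℂ] A →ₗ[ℂ] A where
  toFun h :=
    { toFun := fun a => h • a
      map_add' := fun a b => smul_add h a b
      map_smul' := fun c a => smul_comm h c a }
  map_add' h₁ h₂ := LinearMap.ext fun a => add_smul h₁ h₂ a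
  map_smul' c h := LinearMap.ext fun a => smul_assoc c h a

/-- The action map `μ : H ⊗ A → A`. -/
def mu : H ⊗[ℂ] A →ₗ[ℂ] A := TensorProduct.lift (actB H A)

/-- `τ : H ⊗ A → A ⊗ H`, the composite `(μ ⊗ id_H) ∘ (id_H ⊗ σ) ∘ (Δ ⊗ id_A)`, where
`σ : H ⊗ A → A ⊗ H` is the tensor flip and `Δ` is the comultiplication of `H`. -/
def tau : H ⊗[ℂ] A →ₗ[ℂ] A ⊗[ℂ] H :=
  LinearMap.rTensor H (mu H A)
    ∘ₗ (TensorProduct.assoc ℂ H A H).symm.toLinearMap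
    ∘ₗ LinearMap.lTensor H (TensorProduct.comm ℂ H A).toLinearMap
    ∘ₗ (TensorProduct.assoc ℂ H H A).toLinearMap
    ∘ₗ LinearMap.rTensor A (Coalgebra.comul (R := ℂ) (A := H))

/-- The smash multiplication `m# : (A ⊗ H) ⊗ (A ⊗ H) → A ⊗ H`, the composite
`(m_A ⊗ m_H) ∘ (id_A ⊗ τ ⊗ id_H)`. -/
def smashMul : (A ⊗[ℂ] H) ⊗[ℂ] (A ⊗[ℂ] H) →ₗ[ℂ] A ⊗[ℂ] H :=
  TensorProduct.map (LinearMap.mul' ℂ A) (LinearMap.mul' ℂ H)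
    ∘ₗ (TensorProduct.assoc ℂ A A (H ⊗[ℂ] H)).symm.toLinearMap
    ∘ₗ LinearMap.lTensor A
        ((TensorProduct.assoc ℂ A H H).toLinearMap
          ∘ₗ LinearMap.rTensor H (tau H A)
          ∘ₗ (TensorProduct.assoc ℂ H A H).symm.toLinearMap)
    ∘ₗ (TensorProduct.assoc ℂ A H (A ⊗[ℂ] H)).toLinearMap

/-- `id_A ⊗ ε : A ⊗ H → A ⊗ ℂ ≅ A`, where `ε` is the counit of `H`. -/
def epsA : A ⊗[ℂ] H →ₗ[ℂ] A :=
  (TensorProduct.rid ℂ A).toLinearMap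
    ∘ₗ LinearMap.lTensor A (Coalgebra.counit (R := ℂ) (A := H))

/-- The absolutely convex hull with its December 2024 Mathlib meaning: the smallest set
containing `s` that is `𝕜`-balanced and `ℝ`-convex. -/
def absConvexHullOld (𝕜 : Type*) {E : Type*} [SeminormedRing 𝕜] [SMul 𝕜 E] [SMul ℝ E]
    [AddCommMonoid E] (s : Set E) : Set E :=
  ⋂₀ {t : Set E | s ⊆ t ∧ (Balanced 𝕜 t ∧ Convex ℝ t)}

set_option maxHeartbeats 1000000
set_option synthInstance.maxHeartbeats 200000

section Helpers

lemma tau_tmul (h : H) (b : A) :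
    tau H A (h ⊗ₜ[ℂ] b) =
      TensorProduct.map ((actB H A).flip b) LinearMap.id (Coalgebra.comul (R := ℂ) h) := by
  unfold tau
  simp only [LinearMap.comp_apply, LinearMap.rTensor_tmul]
  induction (Coalgebra.comul (R := ℂ) h) using TensorProduct.induction_on with
  | zero => simp
  | tmul x y =>
      simp [TensorProduct.assoc_tmul, TensorProduct.assoc_symm_tmul, mu, actB,
        TensorProduct.add_tmul]
  | add p q hp hq =>
      simp only [TensorProduct.add_tmul, map_add, hp, hq]

lemma smash_tmul (a : A) (h : H) (b : A) (k : H) :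
    smashMul H A ((a ⊗ₜ[ℂ] h) ⊗ₜ[ℂ] (b ⊗ₜ[ℂ] k)) =
      TensorProduct.map (LinearMap.mulLeft ℂ a ∘ₗ (actB H A).flip b) (LinearMap.mulRight ℂ k)
        (Coalgebra.comul (R := ℂ) h) := by
  unfold smashMul
  simp only [LinearMap.comp_apply, LinearEquiv.coe_coe, TensorProduct.assoc_tmul,
    TensorProduct.assoc_symm_tmul, LinearMap.lTensor_tmul, LinearMap.rTensor_tmul, tau_tmul]
  induction (Coalgebra.comul (R := ℂ) h) using TensorProduct.induction_on with
  | zero => simp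
  | tmul x y =>
      simp [TensorProduct.assoc_tmul, TensorProduct.assoc_symm_tmul, LinearMap.mul'_apply]
  | add p q hp hq =>
      simp only [map_add, TensorProduct.add_tmul, TensorProduct.tmul_add, hp, hq]

variable {E F : Type*} [AddCommGroup E] [Module ℂ E] [Module ℝ E] [IsScalarTower ℝ ℂ E]
  [AddCommGroup F] [Module ℂ F] [Module ℝ F] [IsScalarTower ℝ ℂ F]

lemma subset_absConvexHullOld {s : Set E} : s ⊆ absConvexHullOld ℂ s :=
  fun _ hx => Set.mem_sInter.2 fun _ ht => ht.1 hx

lemma absConvexHullOld_min {s t : Set E} (hst : s ⊆ t) (ht : Balanced ℂ t ∧ Convex ℝ t) :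
    absConvexHullOld ℂ s ⊆ t :=
  Set.sInter_subset_of_mem ⟨hst, ht⟩

lemma absConvex_absConvexHullOld {s : Set E} :
    Balanced ℂ (absConvexHullOld ℂ s) ∧ Convex ℝ (absConvexHullOld ℂ s) :=
  ⟨fun a ha => Set.subset_sInter fun _ ht =>
      (Set.smul_set_mono (Set.sInter_subset_of_mem ht)).trans (ht.2.1 a ha),
    convex_sInter fun _ ht => ht.2.2⟩

lemma absConvexHullOld_mono {s t : Set E} (h : s ⊆ t) :
    absConvexHullOld ℂ s ⊆ absConvexHullOld ℂ t :=
  absConvexHullOld_min (h.trans subset_absConvexHullOld) absConvex_absConvexHullOld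

lemma absConvex_linear_preimage (f : E →ₗ[ℂ] F) {T : Set F} (hT : Balanced ℂ T ∧ Convex ℝ T) :
    Balanced ℂ (f ⁻¹' T) ∧ Convex ℝ (f ⁻¹' T) := by
  refine ⟨?_, ?_⟩
  · intro c hc x hx
    rcases hx with ⟨z, hz, rfl⟩
    show f (c • z) ∈ T
    rw [map_smul]
    exact hT.1.smul_mem hc hz
  · have := hT.2.linear_preimage (f.restrictScalars ℝ)
    exact this

lemma mem_absConvexHull_image (f : E →ₗ[ℂ] F) {s : Set E} {x : E}
    (hx : x ∈ absConvexHullOld ℂ s) : f x ∈ absConvexHullOld ℂ (f '' s) := by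
  have hsub : s ⊆ f ⁻¹' (absConvexHullOld ℂ (f '' s)) := fun a ha =>
    subset_absConvexHullOld (Set.mem_image_of_mem f ha)
  exact absConvexHullOld_min hsub (absConvex_linear_preimage f absConvex_absConvexHullOld) hx

end Helpers

open Pointwise in
/-- Let `U ⊆ A` and `V ⊆ H` be absolutely convex idempotent subsets. Let
`W = {w : H | ∀ u ∈ U, w • u ∈ U}` and `V' = Δ⁻¹(Γ(W ⊗ V))`, where `Γ(S ⊗ T)` denotes the
absolutely convex hull of `{s ⊗ t : s ∈ S, t ∈ T}`. Then the smash multiplication maps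
`Γ(U ⊗ V') × Γ(U ⊗ V)` into `Γ(U ⊗ V)`. -/
theorem arens_michael_stmt9
    [Module ℝ A] [IsScalarTower ℝ ℂ A] [SMulCommClass ℂ ℝ A]
    [Module ℝ H] [IsScalarTower ℝ ℂ H] [SMulCommClass ℂ ℝ H]
    (U : Set A) (hUbal : Balanced ℂ U) (hUconv : Convex ℝ U) (hUidem : U * U ⊆ U)
    (V : Set H) (hVbal : Balanced ℂ V) (hVconv : Convex ℝ V) (hVidem : V * V ⊆ V)
    (W : Set H) (hW : W = {w : H | ∀ u ∈ U, mu H A (w ⊗ₜ[ℂ] u) ∈ U})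
    (V' : Set H) (hV' : V' = (Coalgebra.comul (R := ℂ) (A := H)) ⁻¹'
      (absConvexHullOld ℂ (Set.image2 (fun (w : H) (v : H) => w ⊗ₜ[ℂ] v) W V))) :
    ∀ x ∈ absConvexHullOld ℂ (Set.image2 (fun (u : A) (v : H) => u ⊗ₜ[ℂ] v) U V'),
      ∀ y ∈ absConvexHullOld ℂ (Set.image2 (fun (u : A) (v : H) => u ⊗ₜ[ℂ] v) U V),
        smashMul H A (x ⊗ₜ[ℂ] y) ∈
          absConvexHullOld ℂ (Set.image2 (fun (u : A) (v : H) => u ⊗ₜ[ℂ] v) U V) := by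
  set S : Set (A ⊗[ℂ] H) := Set.image2 (fun (u : A) (v : H) => u ⊗ₜ[ℂ] v) U V with hS
  -- the key computation on generators
  have key : ∀ u ∈ U, ∀ v' ∈ V', ∀ u₂ ∈ U, ∀ v ∈ V,
      smashMul H A ((u ⊗ₜ[ℂ] v') ⊗ₜ[ℂ] (u₂ ⊗ₜ[ℂ] v)) ∈ absConvexHullOld ℂ S := by
    intro u hu v' hv' u₂ hu₂ v hv
    rw [smash_tmul]
    set G : H ⊗[ℂ] H →ₗ[ℂ] A ⊗[ℂ] H :=
      TensorProduct.map (LinearMap.mulLeft ℂ u ∘ₗ (actB H A).flip u₂) (LinearMap.mulRight ℂ v)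
      with hG
    have hcm : (Coalgebra.comul (R := ℂ) v') ∈
        absConvexHullOld ℂ (Set.image2 (fun (w : H) (v : H) => w ⊗ₜ[ℂ] v) W V) := by
      rw [hV'] at hv'; exact hv'
    have h1 := mem_absConvexHull_image G hcm
    refine absConvexHullOld_mono ?_ h1
    rintro _ ⟨z, ⟨w, hw, v₁, hv₁, rfl⟩, rfl⟩
    have hwU : mu H A (w ⊗ₜ[ℂ] u₂) ∈ U := by
      rw [hW] at hw; exact hw u₂ hu₂
    have hmu : mu H A (w ⊗ₜ[ℂ] u₂) = w • u₂ := by simp [mu, actB]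
    refine ⟨u * (w • u₂), hUidem (Set.mul_mem_mul hu (hmu ▸ hwU)), v₁ * v,
      hVidem (Set.mul_mem_mul hv₁ hv), ?_⟩
    simp [hG, actB]
  intro x hx y hy
  have main : absConvexHullOld ℂ (Set.image2 (fun (u : A) (v : H) => u ⊗ₜ[ℂ] v) U V') ⊆
      {x : A ⊗[ℂ] H | ∀ y ∈ absConvexHullOld ℂ S, smashMul H A (x ⊗ₜ[ℂ] y) ∈ absConvexHullOld ℂ S} := by
    refine absConvexHullOld_min ?_ ?_
    · rintro _ ⟨u, hu, v', hv', rfl⟩ y hy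
      have hsub : absConvexHullOld ℂ S ⊆
          (smashMul H A ∘ₗ TensorProduct.mk ℂ (A ⊗[ℂ] H) (A ⊗[ℂ] H) (u ⊗ₜ[ℂ] v')) ⁻¹'
            (absConvexHullOld ℂ S) := by
        refine absConvexHullOld_min ?_
          (absConvex_linear_preimage _ absConvex_absConvexHullOld)
        rintro _ ⟨u₂, hu₂, v, hv, rfl⟩
        exact key u hu v' hv' u₂ hu₂ v hv
      exact hsub hy
    · have heq : {x : A ⊗[ℂ] H | ∀ y ∈ absConvexHullOld ℂ S,
          smashMul H A (x ⊗ₜ[ℂ] y) ∈ absConvexHullOld ℂ S} =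
          ⋂ (y : A ⊗[ℂ] H) (_ : y ∈ absConvexHullOld ℂ S),
            (smashMul H A ∘ₗ (TensorProduct.mk ℂ (A ⊗[ℂ] H) (A ⊗[ℂ] H)).flip y) ⁻¹'
              (absConvexHullOld ℂ S) := by
        ext x
        simp [Set.mem_iInter]
      rw [heq]
      exact ⟨balanced_iInter fun y => balanced_iInter fun _ =>
        (absConvex_linear_preimage _ absConvex_absConvexHullOld).1,
        convex_iInter fun y => convex_iInter fun _ =>
        (absConvex_linear_preimage _ absConvex_absConvexHullOld).2⟩
  exact main hx y hy

end
end
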